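/- Let q ≥ 2 be even and m ≥ 2. The cardinality of D_m := {(r_1,...,r_{m−1}) ∈ {0, q/2, q}^{m−1} : r_k ≤ kq − 2(r_1+...+r_{k−1}) for 2 ≤ k ≤ m−1, and 2(r_1+...+r_{m−1}) = mq} equals the Riordan number R_m (the number of non-crossing partitions of [m] with no singletons), and in particular |D_m| is independent of the even integer q ≥ 2. -/

import Mathlib

open Finset

/-- A finite partition of `{0, ..., m-1}` is non-crossing if one cannot find
`p₁ < q₁ < p₂ < q₂` with `p₁, p₂` in one block and `q₁, q₂` in a different block. -/
def IsNoncrossing {m : ℕ} (P : Finpartition (Finset.univ : Finset (Fin m))) : Prop :=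
  ¬ ∃ p₁ q₁ p₂ q₂ : Fin m, p₁ < q₁ ∧ q₁ < p₂ ∧ p₂ < q₂ ∧
    ∃ b ∈ P.parts, ∃ b' ∈ P.parts, b ≠ b' ∧ p₁ ∈ b ∧ p₂ ∈ b ∧ q₁ ∈ b' ∧ q₂ ∈ b'

/-- A partition has no singletons if every block has size at least 2. -/
def NoSingletons {m : ℕ} (P : Finpartition (Finset.univ : Finset (Fin m))) : Prop :=
  ∀ b ∈ P.parts, 2 ≤ b.card

/-- The `m`-th Riordan number. -/
noncomputable def riordan (m : ℕ) : ℕ :=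
  Nat.card {P : Finpartition (Finset.univ : Finset (Fin m)) // IsNoncrossing P ∧ NoSingletons P}

/-- `riordanBlocks m j = R_{m,j}`: the number of non-crossing partitions of `[m]`
with exactly `j` blocks and no singletons. -/
noncomputable def riordanBlocks (m j : ℕ) : ℕ :=
  Nat.card {P : Finpartition (Finset.univ : Finset (Fin m)) //
    IsNoncrossing P ∧ NoSingletons P ∧ P.parts.card = j}

/-- `r ∈ A_m`: admissible contraction patterns for `I(f)^m` (here `r i` is `r_{i+1}`,
`i = 0, ..., m-2`): each `r_k ∈ {0, ..., q}` and `r_k + 2(r_1 + ⋯ + r_{k-1}) ≤ k q`. -/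
def memA (q m : ℕ) (r : Fin (m - 1) → ℕ) : Prop :=
  (∀ i, r i ≤ q) ∧
    ∀ i : Fin (m - 1),
      r i + 2 * ∑ j ∈ Finset.univ.filter (fun j => j < i), r j ≤ ((i : ℕ) + 1) * q

/-- `r ∈ B_m`: patterns in `A_m` with total contraction `2(r_1 + ⋯ + r_{m-1}) = m q`. -/
def memB (q m : ℕ) (r : Fin (m - 1) → ℕ) : Prop :=
  memA q m r ∧ 2 * ∑ i, r i = m * q

/-- `r ∈ D_m`: patterns in `B_m` with all entries in `{0, q/2, q}`. -/
def memD (q m : ℕ) (r : Fin (m - 1) → ℕ) : Prop :=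
  memB q m r ∧ ∀ i, r i = 0 ∨ r i = q / 2 ∨ r i = q

namespace CardD

/-- level before position `k`. -/
def lvl (w : ℕ → ℕ) (k : ℕ) : ℤ := (k : ℤ) - ∑ j ∈ Finset.range k, (w j : ℤ)

def Valid (m : ℕ) (w : ℕ → ℕ) : Prop :=
  (∀ k, k < m → w k ≤ 2) ∧ (∀ k, k < m → (w k : ℤ) ≤ 2 * lvl w k) ∧ lvl w m = 0

@[simp] lemma lvl_zero (w : ℕ → ℕ) : lvl w 0 = 0 := by simp [lvl]

lemma lvl_succ (w : ℕ → ℕ) (k : ℕ) : lvl w (k+1) = lvl w k + 1 - w k := by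
  simp [lvl, Finset.sum_range_succ]; ring

def bh (w : ℕ → ℕ) (e : ℕ) : ℤ := max (lvl w e) (lvl w (e+1))

lemma bh_spec (w : ℕ → ℕ) (e : ℕ) :
    (bh w e = lvl w e ∨ bh w e = lvl w (e+1)) ∧ lvl w e ≤ bh w e ∧ lvl w (e+1) ≤ bh w e :=
  ⟨max_choice _ _, le_max_left _ _, le_max_right _ _⟩

def key (w : ℕ → ℕ) (e : ℕ) : ℕ := Nat.findGreatest (fun j => lvl w j < bh w e) e

variable {m : ℕ} {w : ℕ → ℕ}

lemma lvl_nonneg (hv : Valid m w) : ∀ k, k ≤ m → 0 ≤ lvl w k := by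
  intro k hk
  induction k with
  | zero => simp
  | succ n ih =>
    have hn : n < m := by omega
    have h1 := hv.2.1 n hn
    have h3 := hv.1 n hn
    have h2 := ih (by omega)
    have hs := lvl_succ w n
    omega

lemma lvl_pos (hv : Valid m w) {k : ℕ} (hk : k < m) (h1 : 1 ≤ w k) : 1 ≤ lvl w k := by
  have := hv.2.1 k hk
  omega

lemma bh_pos (hv : Valid m w) {e : ℕ} (he : e < m) : 1 ≤ bh w e := by
  have hb := bh_spec w e
  have hs := lvl_succ w e
  rcases Nat.eq_zero_or_pos (w e) with h | h
  · have h0 : 0 ≤ lvl w e := lvl_nonneg hv e (by omega)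
    omega
  · have h1 : 1 ≤ lvl w e := lvl_pos hv he h
    omega

lemma key_le (e : ℕ) : key w e ≤ e := Nat.findGreatest_le (P := fun j => lvl w j < bh w e) e

lemma lvl_key_lt (hv : Valid m w) {e : ℕ} (he : e < m) : lvl w (key w e) < bh w e := by
  have h0 : lvl w (0:ℕ) < bh w e := by have := bh_pos hv he; simp; omega
  exact Nat.findGreatest_spec (P := fun j => lvl w j < bh w e) (Nat.zero_le e) h0

lemma key_max (hv : Valid m w) {e i : ℕ} (h1 : key w e < i) (h2 : i ≤ e) :
    bh w e ≤ lvl w i :=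
  le_of_not_gt (Nat.findGreatest_is_greatest h1 h2)

lemma key_opener (hv : Valid m w) {e : ℕ} (he : e < m) :
    w (key w e) = 0 ∧ lvl w (key w e + 1) = bh w e := by
  have hlt : lvl w (key w e) < bh w e := lvl_key_lt hv he
  have hs : lvl w (key w e + 1) = lvl w (key w e) + 1 - w (key w e) := lvl_succ w _
  rcases eq_or_lt_of_le (key_le e (w := w)) with heq | hlt2
  · have hb := bh_spec w e
    rw [heq] at hlt hs ⊢
    have hw : w e = 0 := by omega
    exact ⟨hw, by omega⟩
  · have hge : bh w e ≤ lvl w (key w e + 1) := key_max hv (by omega) (by omega)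
    have hw : w (key w e) = 0 := by omega
    exact ⟨hw, by omega⟩

lemma bh_key (hv : Valid m w) {e : ℕ} (he : e < m) : bh w (key w e) = bh w e := by
  obtain ⟨h0, h1⟩ := key_opener hv he
  have hlt : lvl w (key w e) < bh w e := lvl_key_lt hv he
  have hb := bh_spec w (key w e)
  omega

lemma key_key (hv : Valid m w) {e : ℕ} (he : e < m) : key w (key w e) = key w e := by
  have h : lvl w (key w e) < bh w (key w e) := by
    rw [bh_key hv he]; exact lvl_key_lt hv he
  exact Nat.findGreatest_eq h

lemma bh_eq_lvl_key_succ (hv : Valid m w) {e : ℕ} (he : e < m) :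
    bh w e = lvl w (key w e + 1) := ((key_opener hv he).2).symm

lemma bh_eq_of_key_eq (hv : Valid m w) {x y : ℕ} (hx : x < m) (hy : y < m)
    (h : key w x = key w y) : bh w x = bh w y := by
  rw [bh_eq_lvl_key_succ hv hx, bh_eq_lvl_key_succ hv hy, h]

lemma key_eq_self_iff (hv : Valid m w) {e : ℕ} (he : e < m) : key w e = e ↔ w e = 0 := by
  constructor
  · intro h; have := (key_opener hv he).1; rwa [h] at this
  · intro h
    have hs := lvl_succ w e
    have hb := bh_spec w e
    have : lvl w e < bh w e := by omega
    exact Nat.findGreatest_eq this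

lemma le_of_closer (hv : Valid m w) {x y : ℕ} (hx : x < m) (hy : y < m)
    (hwx : w x = 2) (hk : key w y = key w x) : y ≤ x := by
  by_contra hlt
  push_neg at hlt
  have hs := lvl_succ w x
  rw [hwx] at hs
  have hbx := bh_spec w x
  have hby : bh w y = bh w x := bh_eq_of_key_eq hv hy hx hk
  have hkx : key w x ≤ x := key_le x
  have h2 : bh w y ≤ lvl w (x+1) := key_max hv (by omega) (by omega)
  push_cast at hs
  omega

lemma closer_unique (hv : Valid m w) {x y : ℕ} (hx : x < m) (hy : y < m)
    (hwx : w x = 2) (hwy : w y = 2) (hk : key w x = key w y) : x = y :=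
  le_antisymm (le_of_closer hv hy hx hwy hk) (le_of_closer hv hx hy hwx hk.symm)

lemma exists_closer (hv : Valid m w) {k : ℕ} (hk : k < m) (hwk : w k = 0) :
    ∃ x, k < x ∧ x < m ∧ w x = 2 ∧ key w x = k := by
  have hsk := lvl_succ w k
  rw [hwk] at hsk
  push_cast at hsk
  have hbk := bh_spec w k
  set B := bh w k with hBdef
  have hBpos : 1 ≤ B := bh_pos hv hk
  have hB : B = lvl w k + 1 := by omega
  have hex : ∃ t, k + 1 ≤ t ∧ t ≤ m ∧ lvl w t < B := ⟨m, by omega, le_refl m, by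
    rw [hv.2.2]; omega⟩
  classical
  obtain ⟨hT1, hT2, hT3⟩ := Nat.find_spec hex
  set T := Nat.find hex with hT
  have hmin : ∀ t, t < T → ¬(k + 1 ≤ t ∧ t ≤ m ∧ lvl w t < B) := fun t ht => Nat.find_min hex ht
  have hTk1 : T ≠ k + 1 := by
    intro h
    rw [h] at hT3
    omega
  have hTge : k + 2 ≤ T := by omega
  have hx1 : k + 1 ≤ T - 1 := by omega
  set x := T - 1 with hxdef
  have hxm : x < m := by omega
  have hxsucc : x + 1 = T := by omega
  have hlvlx : B ≤ lvl w x := by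
    rcases eq_or_lt_of_le hx1 with h | h
    · rw [← h]; omega
    · have := hmin x (by omega)
      push_neg at this
      have := this (by omega) (by omega)
      omega
  have hlvlT : lvl w T < B := hT3
  have hsx := lvl_succ w x
  rw [hxsucc] at hsx
  have hwx : w x = 2 := by
    have hle := hv.1 x hxm
    omega
  refine ⟨x, by omega, hxm, hwx, ?_⟩
  have hbx := bh_spec w x
  rw [hxsucc] at hbx
  have hlvlxB : lvl w x = B := by rw [hwx] at hsx; push_cast at hsx; omega
  have hbxB : bh w x = B := by omega
  rw [key, Nat.findGreatest_eq_iff]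
  refine ⟨by omega, fun _ => by rw [hbxB]; omega, ?_⟩
  intro n hn hnx
  rw [hbxB]
  push_neg
  rcases eq_or_lt_of_le (show k + 1 ≤ n by omega) with h | h
  · rw [← h]; omega
  · have := hmin n (by omega)
    push_neg at this
    have := this (by omega) (by omega)
    omega

/-! ### the partition associated to a word -/

section PartitionDef

variable (m : ℕ) (w : ℕ → ℕ)

def fiber (x : Fin m) : Finset (Fin m) := univ.filter fun y => key w (y:ℕ) = key w (x:ℕ)

lemma mem_fiber {x y : Fin m} : y ∈ fiber m w x ↔ key w (y:ℕ) = key w (x:ℕ) := by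
  simp [fiber]

def ptn : Finpartition (univ : Finset (Fin m)) where
  parts := (univ : Finset (Fin m)).image (fiber m w)
  supIndep := by
    rw [Finset.supIndep_iff_pairwiseDisjoint]
    intro b hb c hc hbc
    simp only [coe_image, Set.mem_image, mem_coe, mem_univ, true_and] at hb hc
    obtain ⟨x, -, rfl⟩ := hb
    obtain ⟨y, -, rfl⟩ := hc
    simp only [Function.onFun, id]
    rw [Finset.disjoint_left]
    intro z hzx hzy
    rw [mem_fiber] at hzx hzy
    apply hbc
    unfold fiber
    rw [hzx] at hzy
    rw [hzy]
  sup_parts := by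
    apply le_antisymm
    · intro z _; exact mem_univ z
    · intro z _
      rw [mem_sup]
      exact ⟨fiber m w z, mem_image_of_mem _ (mem_univ z), (mem_fiber m w).mpr rfl⟩
  bot_notMem := by
    simp only [bot_eq_empty, mem_image, mem_univ, true_and]
    rintro ⟨x, hx⟩
    have : x ∈ fiber m w x := (mem_fiber m w).mpr rfl
    rw [hx] at this
    exact notMem_empty x this

lemma mem_ptn_parts {b : Finset (Fin m)} :
    b ∈ (ptn m w).parts ↔ ∃ x : Fin m, b = fiber m w x := by
  simp only [ptn, mem_image, mem_univ, true_and]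
  constructor
  · rintro ⟨x, rfl⟩; exact ⟨x, rfl⟩
  · rintro ⟨x, rfl⟩; exact ⟨x, rfl⟩

lemma part_ptn (x : Fin m) : (ptn m w).part x = fiber m w x :=
  Finpartition.part_eq_of_mem _ ((mem_ptn_parts m w).mpr ⟨x, rfl⟩) ((mem_fiber m w).mpr rfl)

lemma fiber_eq_of_key_eq {x y : Fin m} (h : key w (x:ℕ) = key w (y:ℕ)) :
    fiber m w x = fiber m w y := by
  unfold fiber
  simp only [h]

end PartitionDef

lemma ptn_noSingletons (hv : Valid m w) : NoSingletons (ptn m w) := by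
  intro b hb
  obtain ⟨x, rfl⟩ := (mem_ptn_parts m w).mp hb
  have hxm : (x:ℕ) < m := x.isLt
  have hk : key w (x:ℕ) < m := lt_of_le_of_lt (key_le _) hxm
  obtain ⟨c, hc1, hc2, hc3, hc4⟩ := exists_closer hv hk (key_opener hv hxm).1
  refine Finset.one_lt_card.mpr ⟨⟨key w (x:ℕ), hk⟩, ?_, ⟨c, hc2⟩, ?_, ?_⟩
  · rw [mem_fiber]; exact key_key hv hxm
  · rw [mem_fiber]; exact hc4
  · intro h
    have := congrArg Fin.val h
    simp only [Fin.val_mk] at this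
    omega

lemma ptn_noncrossing (hv : Valid m w) : IsNoncrossing (ptn m w) := by
  rintro ⟨p1, q1, p2, q2, h12, h23, h34, b, hb, b', hb', hne, hp1, hp2, hq1, hq2⟩
  obtain ⟨x, rfl⟩ := (mem_ptn_parts m w).mp hb
  obtain ⟨y, rfl⟩ := (mem_ptn_parts m w).mp hb'
  rw [mem_fiber] at hp1 hp2 hq1 hq2
  have h12' : (p1:ℕ) < (q1:ℕ) := h12
  have h23' : (q1:ℕ) < (p2:ℕ) := h23
  have h34' : (p2:ℕ) < (q2:ℕ) := h34
  have hkk' : key w (x:ℕ) ≠ key w (y:ℕ) := fun h => hne (fiber_eq_of_key_eq m w h)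
  have hkp1 : key w (p1:ℕ) ≤ (p1:ℕ) := key_le _
  have hkq1 : key w (q1:ℕ) ≤ (q1:ℕ) := key_le _
  have hB : bh w (p1:ℕ) = bh w (p2:ℕ) := bh_eq_of_key_eq hv p1.isLt p2.isLt (hp1.trans hp2.symm)
  have hB' : bh w (q1:ℕ) = bh w (q2:ℕ) := bh_eq_of_key_eq hv q1.isLt q2.isLt (hq1.trans hq2.symm)
  have hlk : lvl w (key w (p1:ℕ)) < bh w (p1:ℕ) := lvl_key_lt hv p1.isLt
  have hlk' : lvl w (key w (q1:ℕ)) < bh w (q1:ℕ) := lvl_key_lt hv q1.isLt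
  rw [hp1] at hkp1 hlk
  rw [hq1] at hkq1 hlk'
  rcases Nat.lt_or_ge (key w (x:ℕ)) (key w (y:ℕ)) with hlt | hge
  · -- k < k'
    have n1 : bh w (p2:ℕ) ≤ lvl w (key w (y:ℕ)) := by
      apply key_max hv (by rw [hp2]; omega) (by omega)
    have n2 : bh w (q2:ℕ) ≤ lvl w (p2:ℕ) := by
      apply key_max hv (by rw [hq2]; omega) (by omega)
    have n3 : lvl w (p2:ℕ) ≤ bh w (p2:ℕ) := (bh_spec w _).2.1
    omega
  · have hlt : key w (y:ℕ) < key w (x:ℕ) := by omega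
    have n1 : bh w (q2:ℕ) ≤ lvl w (key w (x:ℕ)) := by
      apply key_max hv (by rw [hq2]; omega) (by omega)
    have n2 : bh w (p2:ℕ) ≤ lvl w (q1:ℕ) := by
      apply key_max hv (by rw [hp2]; omega) (by omega)
    have n3 : lvl w (q1:ℕ) ≤ bh w (q1:ℕ) := (bh_spec w _).2.1
    omega

/-! ### the word associated to a partition -/

def typ {m : ℕ} (P : Finpartition (univ : Finset (Fin m))) (x : Fin m) : ℕ :=
  if ∀ y ∈ P.part x, x ≤ y then 0 else if ∀ y ∈ P.part x, y ≤ x then 2 else 1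

def wOf (m : ℕ) (P : Finpartition (univ : Finset (Fin m))) : ℕ → ℕ :=
  fun k => if h : k < m then typ P ⟨k, h⟩ else 0

lemma typ_le {m : ℕ} (P : Finpartition (univ : Finset (Fin m))) (x : Fin m) : typ P x ≤ 2 := by
  unfold typ; split_ifs <;> omega

lemma wOf_lt {m : ℕ} (P : Finpartition (univ : Finset (Fin m))) {k : ℕ} (h : k < m) :
    wOf m P k = typ P ⟨k, h⟩ := dif_pos h

lemma typ_ptn (hv : Valid m w) (x : Fin m) : typ (ptn m w) x = w (x:ℕ) := by
  have hxm : (x:ℕ) < m := x.isLt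
  have hk : key w (x:ℕ) < m := lt_of_le_of_lt (key_le _) hxm
  have c1 : (∀ y ∈ fiber m w x, x ≤ y) ↔ w (x:ℕ) = 0 := by
    constructor
    · intro h
      have hmem : (⟨key w (x:ℕ), hk⟩ : Fin m) ∈ fiber m w x := by
        rw [mem_fiber]; exact key_key hv hxm
      have := h _ hmem
      have hle : (x:ℕ) ≤ key w (x:ℕ) := this
      have : key w (x:ℕ) = (x:ℕ) := le_antisymm (key_le _) hle
      exact (key_eq_self_iff hv hxm).mp this
    · intro h y hy
      rw [mem_fiber] at hy
      have hx : key w (x:ℕ) = (x:ℕ) := (key_eq_self_iff hv hxm).mpr h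
      have : (x:ℕ) ≤ (y:ℕ) := by
        have := key_le (w := w) (y:ℕ); omega
      exact this
  have c2 : w (x:ℕ) ≠ 0 → ((∀ y ∈ fiber m w x, y ≤ x) ↔ w (x:ℕ) = 2) := by
    intro hne
    constructor
    · intro h
      obtain ⟨c, hc1, hc2, hc3, hc4⟩ := exists_closer hv hk (key_opener hv hxm).1
      have hcm : (⟨c, hc2⟩ : Fin m) ∈ fiber m w x := by rw [mem_fiber]; exact hc4
      have h1 : c ≤ (x:ℕ) := h _ hcm
      have h2 : (x:ℕ) ≤ c := le_of_closer hv hc2 hxm hc3 hc4.symm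
      have : (x:ℕ) = c := le_antisymm h2 h1
      rw [this]; exact hc3
    · intro h y hy
      rw [mem_fiber] at hy
      exact le_of_closer hv hxm y.isLt h hy
  unfold typ
  rw [part_ptn]
  have hle2 := hv.1 (x:ℕ) hxm
  split_ifs with h1 h2
  · exact (c1.mp h1).symm
  · have hne : w (x:ℕ) ≠ 0 := fun h => h1 (c1.mpr h)
    exact ((c2 hne).mp h2).symm
  · have hne : w (x:ℕ) ≠ 0 := fun h => h1 (c1.mpr h)
    have hne2 : w (x:ℕ) ≠ 2 := fun h => h2 ((c2 hne).mpr h)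
    omega

def opn {m : ℕ} (P : Finpartition (univ : Finset (Fin m))) (i : ℕ) : Finset (Finset (Fin m)) :=
  P.parts.filter (fun b => (∃ y ∈ b, (y:ℕ) < i) ∧ ∃ y ∈ b, i ≤ (y:ℕ))

def opnc {m : ℕ} (P : Finpartition (univ : Finset (Fin m))) (x : Fin m) :
    Finset (Finset (Fin m)) :=
  P.parts.filter (fun b => (∃ y ∈ b, (y:ℕ) ≤ (x:ℕ)) ∧ ∃ y ∈ b, (x:ℕ) ≤ (y:ℕ))

variable {P : Finpartition (univ : Finset (Fin m))}

lemma lvl_wOf (hP : NoSingletons P) : ∀ i, i ≤ m → lvl (wOf m P) i = ((opn P i).card : ℤ) := by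
  intro i
  induction i with
  | zero =>
    intro _
    have : opn P 0 = ∅ := by
      apply Finset.filter_false_of_mem
      rintro b _ ⟨⟨y, _, hy⟩, -⟩
      omega
    simp [this]
  | succ i ih =>
    intro him
    have hi : i < m := by omega
    set e : Fin m := ⟨i, hi⟩ with he
    have hbp : P.part e ∈ P.parts := P.part_mem.2 (mem_univ e)
    have heb : e ∈ P.part e := P.mem_part (mem_univ e)
    have huniq : ∀ bb ∈ P.parts, ∀ y : Fin m, y ∈ bb → (y:ℕ) = i → bb = P.part e := by
      intro bb hbb y hy hyi
      have hye : y = e := Fin.ext hyi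
      rw [hye] at hy
      exact P.eq_of_mem_parts hbb hbp hy heb
    have hwi : wOf m P i = typ P e := wOf_lt P hi
    have hs := lvl_succ (wOf m P) i
    have hli := ih (by omega)
    by_cases h1 : ∀ y ∈ P.part e, e ≤ y
    · have ht : typ P e = 0 := by unfold typ; rw [if_pos h1]
      have hnm : P.part e ∉ opn P i := by
        rw [opn, mem_filter]
        rintro ⟨-, ⟨y, hy, hylt⟩, -⟩
        have : e ≤ y := h1 y hy
        have : (e:ℕ) ≤ (y:ℕ) := this
        simp only [he] at this
        omega
      have hset : opn P (i+1) = insert (P.part e) (opn P i) := by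
        ext bb
        simp only [opn, mem_filter, mem_insert]
        constructor
        · rintro ⟨hbb, ⟨y1, hy1, hy1lt⟩, ⟨y2, hy2, hy2ge⟩⟩
          by_cases hbbb : bb = P.part e
          · exact Or.inl hbbb
          · refine Or.inr ⟨hbb, ⟨y1, hy1, ?_⟩, ⟨y2, hy2, by omega⟩⟩
            have : (y1:ℕ) ≠ i := fun hh => hbbb (huniq bb hbb y1 hy1 hh)
            omega
        · rintro (rfl | ⟨hbb, ⟨y1, hy1, hy1lt⟩, ⟨y2, hy2, hy2ge⟩⟩)
          · refine ⟨hbp, ⟨e, heb, by simp [he]⟩, ?_⟩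
            obtain ⟨y, hy, hyne⟩ := Finset.exists_mem_ne (hP _ hbp) e
            have hle : (e:ℕ) ≤ (y:ℕ) := h1 y hy
            have : (y:ℕ) ≠ i := fun hh => hyne (Fin.ext hh)
            exact ⟨y, hy, by simp only [he] at hle ⊢; omega⟩
          · refine ⟨hbb, ⟨y1, hy1, by omega⟩, ⟨y2, hy2, ?_⟩⟩
            have hbbmem : bb ∈ opn P i := by
              rw [opn, mem_filter]; exact ⟨hbb, ⟨y1, hy1, hy1lt⟩, ⟨y2, hy2, hy2ge⟩⟩
            have hbbb : bb ≠ P.part e := fun hh => hnm (hh ▸ hbbmem)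
            have : (y2:ℕ) ≠ i := fun hh => hbbb (huniq bb hbb y2 hy2 hh)
            omega
      rw [hset, card_insert_of_notMem hnm]
      rw [hwi, ht] at hs
      push_cast
      omega
    · push_neg at h1
      obtain ⟨y0, hy0, hy0lt⟩ := h1
      have hy0i : (y0:ℕ) < i := by
        have : y0 < e := hy0lt
        simpa [he, Fin.lt_def] using this
      have hbmem : P.part e ∈ opn P i := by
        rw [opn, mem_filter]
        exact ⟨hbp, ⟨y0, hy0, hy0i⟩, ⟨e, heb, by simp [he]⟩⟩
      have h1' : ¬ ∀ y ∈ P.part e, e ≤ y := by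
        push_neg; exact ⟨y0, hy0, hy0lt⟩
      by_cases h2 : ∀ y ∈ P.part e, y ≤ e
      · have ht : typ P e = 2 := by unfold typ; rw [if_neg h1', if_pos h2]
        have hset : opn P (i+1) = (opn P i).erase (P.part e) := by
          ext bb
          simp only [opn, mem_filter, mem_erase]
          constructor
          · rintro ⟨hbb, ⟨y1, hy1, hy1lt⟩, ⟨y2, hy2, hy2ge⟩⟩
            have hbbb : bb ≠ P.part e := by
              intro hh
              have := h2 y2 (by rwa [hh] at hy2)
              have : (y2:ℕ) ≤ (e:ℕ) := this
              simp only [he] at this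
              omega
            refine ⟨hbbb, hbb, ⟨y1, hy1, ?_⟩, ⟨y2, hy2, by omega⟩⟩
            have : (y1:ℕ) ≠ i := fun hh => hbbb (huniq bb hbb y1 hy1 hh)
            omega
          · rintro ⟨hbbb, hbb, ⟨y1, hy1, hy1lt⟩, ⟨y2, hy2, hy2ge⟩⟩
            refine ⟨hbb, ⟨y1, hy1, by omega⟩, ⟨y2, hy2, ?_⟩⟩
            have : (y2:ℕ) ≠ i := fun hh => hbbb (huniq bb hbb y2 hy2 hh)
            omega
        rw [hset, card_erase_of_mem hbmem]
        rw [hwi, ht] at hs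
        have hcard : 1 ≤ (opn P i).card := card_pos.mpr ⟨_, hbmem⟩
        push_cast [Nat.cast_sub hcard]
        omega
      · push_neg at h2
        obtain ⟨y3, hy3, hy3gt⟩ := h2
        have hy3i : i < (y3:ℕ) := by
          have : e < y3 := hy3gt
          simpa [he, Fin.lt_def] using this
        have h2' : ¬ ∀ y ∈ P.part e, y ≤ e := by
          push_neg; exact ⟨y3, hy3, hy3gt⟩
        have ht : typ P e = 1 := by unfold typ; rw [if_neg h1', if_neg h2']
        have hset : opn P (i+1) = opn P i := by
          ext bb
          simp only [opn, mem_filter]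
          constructor
          · rintro ⟨hbb, ⟨y1, hy1, hy1lt⟩, ⟨y2, hy2, hy2ge⟩⟩
            refine ⟨hbb, ?_, ⟨y2, hy2, by omega⟩⟩
            by_cases hh : (y1:ℕ) = i
            · have := huniq bb hbb y1 hy1 hh
              subst this
              exact ⟨y0, hy0, hy0i⟩
            · exact ⟨y1, hy1, by omega⟩
          · rintro ⟨hbb, ⟨y1, hy1, hy1lt⟩, ⟨y2, hy2, hy2ge⟩⟩
            refine ⟨hbb, ⟨y1, hy1, by omega⟩, ?_⟩
            by_cases hh : (y2:ℕ) = i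
            · have := huniq bb hbb y2 hy2 hh
              subst this
              exact ⟨y3, hy3, by omega⟩
            · exact ⟨y2, hy2, by omega⟩
        rw [hset]
        rw [hwi, ht] at hs
        omega

lemma valid_wOf (hP : NoSingletons P) : Valid m (wOf m P) := by
  refine ⟨fun k hk => ?_, fun k hk => ?_, ?_⟩
  · rw [wOf_lt P hk]; exact typ_le P _
  · rw [wOf_lt P hk, lvl_wOf hP k (by omega)]
    set e : Fin m := ⟨k, hk⟩ with he
    by_cases h1 : ∀ y ∈ P.part e, e ≤ y
    · have ht : typ P e = 0 := by unfold typ; rw [if_pos h1]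
      rw [ht]; positivity
    · have hcard : 1 ≤ (opn P k).card := by
        apply card_pos.mpr
        refine ⟨P.part e, ?_⟩
        rw [opn, mem_filter]
        push_neg at h1
        obtain ⟨y0, hy0, hy0lt⟩ := h1
        have hy0i : (y0:ℕ) < k := by
          have : y0 < e := hy0lt
          simpa [he, Fin.lt_def] using this
        exact ⟨P.part_mem.2 (mem_univ e), ⟨y0, hy0, hy0i⟩,
          ⟨e, P.mem_part (mem_univ e), by simp [he]⟩⟩
      have := typ_le P e
      push_cast
      omega
  · rw [lvl_wOf hP m le_rfl]
    have : opn P m = ∅ := by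
      apply Finset.filter_false_of_mem
      rintro b _ ⟨-, ⟨y, _, hy⟩⟩
      have := y.isLt
      omega
    simp [this]

lemma opnc_eq_of_min (hP : NoSingletons P) (x : Fin m) (h1 : ∀ y ∈ P.part x, x ≤ y) :
    opnc P x = opn P ((x:ℕ)+1) := by
  ext bb
  simp only [opnc, opn, mem_filter]
  constructor
  · rintro ⟨hbb, ⟨y1, hy1, hy1le⟩, ⟨y2, hy2, hy2ge⟩⟩
    refine ⟨hbb, ⟨y1, hy1, by omega⟩, ?_⟩
    by_cases hh : (y2:ℕ) = (x:ℕ)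
    · have hy2x : y2 = x := Fin.ext hh
      have hbbx : bb = P.part x := P.eq_of_mem_parts hbb (P.part_mem.2 (mem_univ x))
        (hy2x ▸ hy2) (P.mem_part (mem_univ x))
      obtain ⟨z, hz, hzne⟩ := Finset.exists_mem_ne (hP _ (P.part_mem.2 (mem_univ x))) x
      have hle : (x:ℕ) ≤ (z:ℕ) := h1 z hz
      have hne' : (z:ℕ) ≠ (x:ℕ) := fun hc => hzne (Fin.ext hc)
      exact ⟨z, by rw [hbbx]; exact hz, by omega⟩
    · exact ⟨y2, hy2, by omega⟩
  · rintro ⟨hbb, ⟨y1, hy1, hy1lt⟩, ⟨y2, hy2, hy2ge⟩⟩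
    exact ⟨hbb, ⟨y1, hy1, by omega⟩, ⟨y2, hy2, by omega⟩⟩

lemma opnc_eq_of_not_min (x : Fin m) (h1 : ¬ ∀ y ∈ P.part x, x ≤ y) :
    opnc P x = opn P (x:ℕ) := by
  push_neg at h1
  obtain ⟨y0, hy0, hy0lt⟩ := h1
  have hy0x : (y0:ℕ) < (x:ℕ) := hy0lt
  ext bb
  simp only [opnc, opn, mem_filter]
  constructor
  · rintro ⟨hbb, ⟨y1, hy1, hy1le⟩, ⟨y2, hy2, hy2ge⟩⟩
    refine ⟨hbb, ?_, ⟨y2, hy2, hy2ge⟩⟩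
    by_cases hh : (y1:ℕ) = (x:ℕ)
    · have hy1x : y1 = x := Fin.ext hh
      have hbbx : bb = P.part x := P.eq_of_mem_parts hbb (P.part_mem.2 (mem_univ x))
        (hy1x ▸ hy1) (P.mem_part (mem_univ x))
      exact ⟨y0, by rw [hbbx]; exact hy0, hy0x⟩
    · exact ⟨y1, hy1, by omega⟩
  · rintro ⟨hbb, ⟨y1, hy1, hy1lt⟩, ⟨y2, hy2, hy2ge⟩⟩
    exact ⟨hbb, ⟨y1, hy1, by omega⟩, ⟨y2, hy2, hy2ge⟩⟩

lemma bh_wOf (hP : NoSingletons P) (x : Fin m) :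
    bh (wOf m P) (x:ℕ) = ((opnc P x).card : ℤ) := by
  have hxm : (x:ℕ) < m := x.isLt
  have hli := lvl_wOf hP (x:ℕ) (by omega)
  have hli1 := lvl_wOf hP ((x:ℕ)+1) (by omega)
  have hs := lvl_succ (wOf m P) (x:ℕ)
  have hz := bh_spec (wOf m P) (x:ℕ)
  have hwi : wOf m P (x:ℕ) = typ P x := by
    rw [wOf_lt P hxm]
  by_cases h1 : ∀ y ∈ P.part x, x ≤ y
  · have ht : typ P x = 0 := by unfold typ; rw [if_pos h1]
    rw [opnc_eq_of_min hP x h1, ← hli1]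
    rw [hwi, ht] at hs
    omega
  · rw [opnc_eq_of_not_min x h1, ← hli]
    by_cases h2 : ∀ y ∈ P.part x, y ≤ x
    · have ht : typ P x = 2 := by
        unfold typ; rw [if_neg h1, if_pos h2]
      rw [hwi, ht] at hs
      omega
    · have ht : typ P x = 1 := by
        unfold typ; rw [if_neg h1, if_neg h2]
      rw [hwi, ht] at hs
      omega

lemma key_wOf (hNC : IsNoncrossing P) (hP : NoSingletons P) (x : Fin m) :
    key (wOf m P) (x:ℕ)
      = (((P.part x).min' ⟨x, P.mem_part (mem_univ x)⟩ : Fin m) : ℕ) := by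
  have hxb : x ∈ P.part x := P.mem_part (mem_univ x)
  have hbp : P.part x ∈ P.parts := P.part_mem.2 (mem_univ x)
  set mn : Fin m := (P.part x).min' ⟨x, hxb⟩ with hmn
  have hmnb : mn ∈ P.part x := Finset.min'_mem _ _
  have hmnx : (mn:ℕ) ≤ (x:ℕ) := Finset.min'_le _ x hxb
  -- (ii) strict inequality
  have hsub : opn P (mn:ℕ) ⊆ opnc P x := by
    intro bb hbbmem
    rw [opn, mem_filter] at hbbmem
    obtain ⟨hbb, ⟨y1, hy1, hy1lt⟩, ⟨y2, hy2, hy2ge⟩⟩ := hbbmem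
    have hbbne : bb ≠ P.part x := by
      rintro rfl
      have := Finset.min'_le _ y1 hy1
      have : (mn:ℕ) ≤ (y1:ℕ) := this
      omega
    rw [opnc, mem_filter]
    refine ⟨hbb, ⟨y1, hy1, by omega⟩, ?_⟩
    by_cases hc : (x:ℕ) ≤ (y2:ℕ)
    · exact ⟨y2, hy2, hc⟩
    · exfalso
      have hmny2 : (mn:ℕ) < (y2:ℕ) := by
        rcases eq_or_lt_of_le hy2ge with h | h
        · exfalso
          have : mn = y2 := Fin.ext h
          rw [this] at hmnb
          exact hbbne (P.eq_of_mem_parts hbb hbp hy2 hmnb)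
        · exact h
      exact hNC ⟨y1, mn, y2, x,
        by exact hy1lt, by exact hmny2, by omega,
        bb, hbb, P.part x, hbp, hbbne, hy1, hy2, hmnb, hxb⟩
  have hbin : P.part x ∈ opnc P x := by
    rw [opnc, mem_filter]
    exact ⟨hbp, ⟨x, hxb, le_rfl⟩, ⟨x, hxb, le_rfl⟩⟩
  have hbnotin : P.part x ∉ opn P (mn:ℕ) := by
    rw [opn, mem_filter]
    rintro ⟨-, ⟨y1, hy1, hy1lt⟩, -⟩
    have : (mn:ℕ) ≤ (y1:ℕ) := Finset.min'_le _ y1 hy1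
    omega
  have hcardlt : (opn P (mn:ℕ)).card < (opnc P x).card :=
    Finset.card_lt_card (Finset.ssubset_iff_of_subset hsub |>.mpr
      ⟨P.part x, hbin, hbnotin⟩)
  -- (iii)
  have hsub2 : ∀ i, (mn:ℕ) < i → i ≤ (x:ℕ) → opnc P x ⊆ opn P i := by
    intro i hi1 hi2 bb hbbmem
    rw [opnc, mem_filter] at hbbmem
    obtain ⟨hbb, ⟨y1, hy1, hy1le⟩, ⟨y2, hy2, hy2ge⟩⟩ := hbbmem
    rw [opn, mem_filter]
    by_cases hbbb : bb = P.part x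
    · subst hbbb
      exact ⟨hbb, ⟨mn, hmnb, hi1⟩, ⟨x, hxb, hi2⟩⟩
    · refine ⟨hbb, ?_, ⟨y2, hy2, by omega⟩⟩
      by_contra hcon
      push_neg at hcon
      have hy1ge : i ≤ (y1:ℕ) := hcon y1 hy1
      have hy1x : (y1:ℕ) < (x:ℕ) := by
        rcases eq_or_lt_of_le hy1le with h | h
        · exfalso
          have : y1 = x := Fin.ext h
          rw [this] at hy1
          exact hbbb (P.eq_of_mem_parts hbb hbp hy1 hxb)
        · exact h
      have hxy2 : (x:ℕ) < (y2:ℕ) := by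
        rcases eq_or_lt_of_le hy2ge with h | h
        · exfalso
          have : x = y2 := Fin.ext h
          rw [← this] at hy2
          exact hbbb (P.eq_of_mem_parts hbb hbp hy2 hxb)
        · exact h
      exact hNC ⟨mn, y1, x, y2,
        by omega, by exact hy1x, by exact hxy2,
        P.part x, hbp, bb, hbb, Ne.symm hbbb, hmnb, hxb, hy1, hy2⟩
  -- conclude
  have hbhx := bh_wOf hP x
  rw [key, Nat.findGreatest_eq_iff]
  refine ⟨hmnx, fun _ => ?_, fun n hn hnx => ?_⟩
  · rw [lvl_wOf hP (mn:ℕ) (by omega), hbhx]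
    exact_mod_cast hcardlt
  · rw [lvl_wOf hP n (by have := x.isLt; omega), hbhx]
    push_neg
    exact_mod_cast Finset.card_le_card (hsub2 n hn hnx)

lemma fiber_wOf (hNC : IsNoncrossing P) (hP : NoSingletons P) (x : Fin m) :
    fiber m (wOf m P) x = P.part x := by
  ext y
  rw [mem_fiber, key_wOf hNC hP, key_wOf hNC hP]
  have hxb : x ∈ P.part x := P.mem_part (mem_univ x)
  have hyb : y ∈ P.part y := P.mem_part (mem_univ y)
  constructor
  · intro h
    have hmm : (P.part y).min' ⟨y, hyb⟩ = (P.part x).min' ⟨x, hxb⟩ := Fin.ext h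
    have h1 : (P.part y).min' ⟨y, hyb⟩ ∈ P.part y := Finset.min'_mem _ _
    have h2 : (P.part x).min' ⟨x, hxb⟩ ∈ P.part x := Finset.min'_mem _ _
    rw [hmm] at h1
    have := P.eq_of_mem_parts (P.part_mem.2 (mem_univ y)) (P.part_mem.2 (mem_univ x)) h1 h2
    rw [← this]
    exact hyb
  · intro h
    have : P.part y = P.part x :=
      P.eq_of_mem_parts (P.part_mem.2 (mem_univ y)) (P.part_mem.2 (mem_univ x)) hyb h
    have hmc : ∀ (st : Finset (Fin m)) (t : Finset (Fin m)) (h : st = t) (hs : st.Nonempty)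
        (ht : t.Nonempty), st.min' hs = t.min' ht := by
      rintro st t rfl hs ht; rfl
    exact congrArg Fin.val (hmc _ _ this ⟨y, hyb⟩ ⟨x, hxb⟩)

lemma ptn_wOf (hNC : IsNoncrossing P) (hP : NoSingletons P) : ptn m (wOf m P) = P := by
  apply Finpartition.ext
  ext b
  rw [mem_ptn_parts]
  constructor
  · rintro ⟨x, rfl⟩
    rw [fiber_wOf hNC hP]
    exact P.part_mem.2 (mem_univ x)
  · intro hb
    obtain ⟨x, hx⟩ := P.nonempty_of_mem_parts hb
    exact ⟨x, by rw [fiber_wOf hNC hP, P.part_eq_of_mem hb hx]⟩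

/-! ### arithmetic bridge -/

lemma sum_filter_fin (m : ℕ) (f : ℕ → ℕ) {k : ℕ} (hk : k ≤ m - 1) :
    ∑ j ∈ (univ.filter (fun j : Fin (m-1) => (j:ℕ) < k)), f (j:ℕ) = ∑ j ∈ range k, f j := by
  rw [Finset.sum_filter]
  rw [Fin.sum_univ_eq_sum_range (fun j => if j < k then f j else 0) (m-1)]
  rw [← Finset.sum_filter]
  have : (range (m-1)).filter (fun j => j < k) = range k := by
    ext j
    simp only [mem_filter, mem_range]
    omega
  rw [this]

def wrd (q m : ℕ) (r : Fin (m-1) → ℕ) : ℕ → ℕ :=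
  fun n => if h : 0 < n ∧ n - 1 < m - 1 then 2 * r ⟨n - 1, h.2⟩ / q else 0

def rOf (q m : ℕ) (P : Finpartition (univ : Finset (Fin m))) : Fin (m-1) → ℕ :=
  fun i => (q/2) * wOf m P ((i:ℕ)+1)

variable {q p : ℕ}

lemma wrd_zero (q m : ℕ) (r : Fin (m-1) → ℕ) : wrd q m r 0 = 0 := by simp [wrd]

lemma wrd_succ (q m : ℕ) (r : Fin (m-1) → ℕ) (i : Fin (m-1)) :
    wrd q m r ((i:ℕ)+1) = 2 * r i / q := by
  have h : 0 < (i:ℕ)+1 ∧ (i:ℕ)+1-1 < m - 1 := ⟨Nat.succ_pos _, by simpa using i.isLt⟩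
  rw [wrd, dif_pos h]
  have he : (⟨(i:ℕ)+1-1, h.2⟩ : Fin (m-1)) = i := Fin.ext (by simp)
  rw [he]

lemma wrd_big (q m : ℕ) (r : Fin (m-1) → ℕ) {n : ℕ} (hn : ¬ (0 < n ∧ n - 1 < m - 1)) :
    wrd q m r n = 0 := by rw [wrd, dif_neg hn]

lemma memD_cases (hq2 : q = 2 * p) (hp : 1 ≤ p) {r : Fin (m-1) → ℕ}
    (hr : memD q m r) (i : Fin (m-1)) :
    (r i = 0 ∧ 2 * r i / q = 0) ∨ (r i = p ∧ 2 * r i / q = 1) ∨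
      (r i = 2*p ∧ 2 * r i / q = 2) := by
  have hq0 : 0 < q := by omega
  have hdiv : q / 2 = p := by omega
  rcases hr.2 i with h | h | h
  · left; rw [h]; simp
  · right; left
    rw [h, hdiv]
    exact ⟨rfl, by rw [show 2 * p = q by omega]; exact Nat.div_self hq0⟩
  · right; right
    rw [h]
    exact ⟨by omega, by rw [Nat.mul_div_assoc 2 (dvd_refl q), Nat.div_self hq0]⟩

lemma lvl_cast (w : ℕ → ℕ) (n : ℕ) :
    lvl w n = (n : ℤ) - ((∑ j ∈ range n, w j : ℕ) : ℤ) := by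
  rw [lvl]; push_cast; ring

/-- the partial-sum dictionary for `wrd`. -/
lemma sum_wrd (hq2 : q = 2 * p) (hp : 1 ≤ p) {r : Fin (m-1) → ℕ} (hr : memD q m r)
    {k : ℕ} (hk : k ≤ m - 1) :
    p * (∑ j ∈ range (k+1), wrd q m r j)
      = ∑ j ∈ (univ.filter (fun j : Fin (m-1) => (j:ℕ) < k)), r j := by
  have h1 : ∑ j ∈ range (k+1), wrd q m r j
      = ∑ j ∈ range k, (fun n => wrd q m r (n+1)) j := by
    rw [Finset.sum_range_succ' (wrd q m r) k, wrd_zero, add_zero]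
  rw [h1, ← sum_filter_fin m (fun n => wrd q m r (n+1)) hk, Finset.mul_sum]
  apply Finset.sum_congr rfl
  intro j _
  rw [wrd_succ]
  rcases memD_cases hq2 hp hr j with ⟨h1, h2⟩ | ⟨h1, h2⟩ | ⟨h1, h2⟩ <;> rw [h2, h1] <;> omega

lemma filter_lt_eq (i : Fin (m-1)) :
    (univ.filter (fun j : Fin (m-1) => j < i))
      = univ.filter (fun j : Fin (m-1) => (j:ℕ) < (i:ℕ)) := by
  ext j
  simp only [mem_filter, mem_univ, true_and, Fin.lt_def]

lemma valid_of_memD (hq2 : q = 2 * p) (hp : 1 ≤ p) (hm : 2 ≤ m) {r : Fin (m-1) → ℕ}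
    (hr : memD q m r) : Valid m (wrd q m r) := by
  have hq0 : 0 < q := by omega
  refine ⟨?_, ?_, ?_⟩
  · -- bounds
    intro n hn
    by_cases h : 0 < n ∧ n - 1 < m - 1
    · have : n = ((⟨n-1, h.2⟩ : Fin (m-1)) : ℕ) + 1 := by simp; omega
      rw [this, wrd_succ]
      rcases memD_cases hq2 hp hr ⟨n-1, h.2⟩ with ⟨-, h2⟩ | ⟨-, h2⟩ | ⟨-, h2⟩ <;> omega
    · rw [wrd_big q m r h]; omega
  · -- admissibility
    intro n hn
    rcases Nat.eq_zero_or_pos n with rfl | hpos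
    · rw [wrd_zero]; simp
    · have hn1 : n - 1 < m - 1 := by omega
      set i : Fin (m-1) := ⟨n-1, hn1⟩ with hi
      have hival : (i:ℕ) = n - 1 := rfl
      have hni : n = (i:ℕ) + 1 := by omega
      have hA := hr.1.1.2 i
      rw [filter_lt_eq] at hA
      have hsum := sum_wrd hq2 hp hr (show (i:ℕ) ≤ m - 1 by omega)
      -- natural number inequality
      have hnat : wrd q m r n + 2 * (∑ j ∈ range n, wrd q m r j) ≤ 2 * n := by
        have hmul : p * (wrd q m r n + 2 * (∑ j ∈ range n, wrd q m r j))
            ≤ p * (2 * n) := by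
          have e1 : p * wrd q m r n = r i := by
            rw [hni, wrd_succ]
            rcases memD_cases hq2 hp hr i with ⟨h1, h2⟩ | ⟨h1, h2⟩ | ⟨h1, h2⟩ <;>
              rw [h2, h1] <;> omega
          have e2 : p * (∑ j ∈ range n, wrd q m r j)
              = ∑ j ∈ (univ.filter (fun j : Fin (m-1) => (j:ℕ) < (i:ℕ))), r j := by
            rw [hni]; exact hsum
          calc p * (wrd q m r n + 2 * (∑ j ∈ range n, wrd q m r j))
              = p * wrd q m r n + 2 * (p * (∑ j ∈ range n, wrd q m r j)) := by ring
            _ = r i + 2 * ∑ j ∈ (univ.filter (fun j : Fin (m-1) => (j:ℕ) < (i:ℕ))), r j := by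
                rw [e1, e2]
            _ ≤ ((i:ℕ) + 1) * q := hA
            _ = p * (2 * n) := by
                rw [hq2, show (i:ℕ) + 1 = n by omega]; ring
        exact Nat.le_of_mul_le_mul_left hmul (by omega)
      rw [lvl_cast]
      omega
  · -- total
    have hB := hr.1.2
    have hsum := sum_wrd hq2 hp hr (le_refl (m-1))
    have hfull : (univ.filter (fun j : Fin (m-1) => (j:ℕ) < m - 1)) = univ := by
      apply Finset.filter_true_of_mem
      intro j _
      exact j.isLt
    rw [hfull] at hsum
    have hm1 : m - 1 + 1 = m := by omega
    rw [hm1] at hsum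
    have hpm : m * q = 2 * (p * m) := by rw [hq2]; ring
    have htot : p * (∑ j ∈ range m, wrd q m r j) = p * m := by
      rw [hsum]; omega
    have : (∑ j ∈ range m, wrd q m r j) = m := by
      exact Nat.eq_of_mul_eq_mul_left (by omega) htot
    rw [lvl_cast, this]
    ring

lemma memD_of_valid (hq2 : q = 2 * p) (hp : 1 ≤ p) (hm : 2 ≤ m) {w : ℕ → ℕ}
    (hv : Valid m w) : memD q m (fun i : Fin (m-1) => (q/2) * w ((i:ℕ)+1)) := by
  have hq0 : 0 < q := by omega
  have hdiv : q / 2 = p := by omega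
  have hw0 : w 0 = 0 := by
    have := hv.2.1 0 (by omega)
    simp at this
    omega
  have hwle : ∀ i : Fin (m-1), w ((i:ℕ)+1) ≤ 2 := fun i => hv.1 _ (by have := i.isLt; omega)
  have hsum : ∀ k, k ≤ m - 1 →
      (∑ j ∈ (univ.filter (fun j : Fin (m-1) => (j:ℕ) < k)), (q/2) * w ((j:ℕ)+1))
        = p * ∑ j ∈ range (k+1), w j := by
    intro k hk
    rw [sum_filter_fin m (fun n => (q/2) * w (n+1)) hk]
    rw [Finset.sum_range_succ' w k, hw0, add_zero, Finset.mul_sum]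
    apply Finset.sum_congr rfl
    intro j _
    rw [hdiv]
  refine ⟨⟨⟨?_, ?_⟩, ?_⟩, ?_⟩
  · intro i
    show (q/2) * w ((i:ℕ)+1) ≤ q
    calc (q/2) * w ((i:ℕ)+1) ≤ (q/2) * 2 := Nat.mul_le_mul_left _ (hwle i)
      _ = q := by omega
  · intro i
    have hlt : (i:ℕ) + 1 < m := by have := i.isLt; omega
    have hih := hv.2.1 ((i:ℕ)+1) hlt
    rw [lvl_cast] at hih
    have hnat : w ((i:ℕ)+1) + 2 * (∑ j ∈ range ((i:ℕ)+1), w j) ≤ 2 * ((i:ℕ)+1) := by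
      omega
    rw [filter_lt_eq, hsum (i:ℕ) (by have := i.isLt; omega)]
    calc (q/2) * w ((i:ℕ)+1) + 2 * (p * ∑ j ∈ range ((i:ℕ)+1), w j)
        = p * (w ((i:ℕ)+1) + 2 * (∑ j ∈ range ((i:ℕ)+1), w j)) := by rw [hdiv]; ring
      _ ≤ p * (2 * ((i:ℕ)+1)) := Nat.mul_le_mul_left _ hnat
      _ = ((i:ℕ)+1) * q := by rw [hq2]; ring
  · -- total
    have htot := hv.2.2
    rw [lvl_cast] at htot
    have hmtot : (∑ j ∈ range m, w j) = m := by omega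
    have hfull : (univ.filter (fun j : Fin (m-1) => (j:ℕ) < m - 1)) = univ := by
      apply Finset.filter_true_of_mem
      intro j _
      exact j.isLt
    have := hsum (m-1) (le_refl _)
    rw [hfull, show m - 1 + 1 = m by omega, hmtot] at this
    rw [this, hq2]
    ring
  · intro i
    have h1 := hwle i
    show (q/2) * w ((i:ℕ)+1) = 0 ∨ (q/2) * w ((i:ℕ)+1) = q / 2 ∨ (q/2) * w ((i:ℕ)+1) = q
    interval_cases h : w ((i:ℕ)+1)
    · left; simp
    · right; left; rw [Nat.mul_one]
    · right; right; omega

lemma left_inv_aux (hq2 : q = 2 * p) (hp : 1 ≤ p) (hm : 2 ≤ m) {r : Fin (m-1) → ℕ}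
    (hr : memD q m r) : rOf q m (ptn m (wrd q m r)) = r := by
  have hv := valid_of_memD hq2 hp hm hr
  funext i
  have hlt : (i:ℕ) + 1 < m := by have := i.isLt; omega
  rw [rOf, wOf_lt _ hlt, typ_ptn hv]
  simp only [Fin.val_mk]
  rw [wrd_succ]
  have hdiv : q / 2 = p := by omega
  rw [hdiv]
  rcases memD_cases hq2 hp hr i with ⟨h1, h2⟩ | ⟨h1, h2⟩ | ⟨h1, h2⟩ <;> rw [h2, h1] <;> omega

lemma right_inv_aux (hq2 : q = 2 * p) (hp : 1 ≤ p) (hm : 2 ≤ m)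
    {P : Finpartition (univ : Finset (Fin m))} (hNC : IsNoncrossing P)
    (hP : NoSingletons P) : ptn m (wrd q m (rOf q m P)) = P := by
  have hq0 : 0 < q := by omega
  have hweq : wrd q m (rOf q m P) = wOf m P := by
    funext n
    by_cases h : 0 < n ∧ n - 1 < m - 1
    · have hn : n = ((⟨n-1, h.2⟩ : Fin (m-1)) : ℕ) + 1 := by simp; omega
      rw [hn, wrd_succ, rOf]
      simp only [Fin.val_mk]
      have hdiv : q / 2 = p := by omega
      rw [hdiv, show 2 * (p * wOf m P (n - 1 + 1)) = wOf m P (n - 1 + 1) * q by rw [hq2]; ring,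
        Nat.mul_div_cancel _ hq0]
    · rw [wrd_big q m _ h]
      rcases Nat.eq_zero_or_pos n with rfl | hpos
      · rw [wOf_lt P (show 0 < m by omega)]
        unfold typ
        rw [if_pos]
        intro y _
        exact Fin.mk_le_of_le_val (by omega)
      · have hnm : ¬ n < m := by omega
        rw [wOf, dif_neg hnm]
  rw [hweq]
  exact ptn_wOf hNC hP



def theEquiv (q m : ℕ) (hqe : Even q) (hq : 2 ≤ q) (hm : 2 ≤ m) :
    {r : Fin (m-1) → ℕ // memD q m r} ≃
      {P : Finpartition (univ : Finset (Fin m)) // IsNoncrossing P ∧ NoSingletons P} := by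
  have hq2 : q = 2 * (q / 2) := by
    obtain ⟨p, hp2⟩ := hqe; omega
  have hp : 1 ≤ q / 2 := by omega
  exact
  { toFun := fun r => ⟨ptn m (wrd q m r.1),
      ptn_noncrossing (valid_of_memD hq2 hp hm r.2),
      ptn_noSingletons (valid_of_memD hq2 hp hm r.2)⟩
    invFun := fun P => ⟨rOf q m P.1, memD_of_valid hq2 hp hm (valid_wOf P.2.2)⟩
    left_inv := fun r => Subtype.ext (left_inv_aux hq2 hp hm r.2)
    right_inv := fun P => Subtype.ext (right_inv_aux hq2 hp hm P.2.1 P.2.2) }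

end CardD


/-- for every even `q ≥ 2` and `m ≥ 2`, the cardinality of `D_m` equals
the Riordan number `R_m`; in particular it does not depend on `q`. -/
theorem card_D_eq_riordan (q m : ℕ) (hq : 2 ≤ q) (hqe : Even q) (hm : 2 ≤ m) :
    Nat.card {r : Fin (m - 1) → ℕ // memD q m r} = riordan m :=
  Nat.card_congr (CardD.theEquiv q m hqe hq hm)
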